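/- The map q ↦ (α_i), where (α_i) denotes the quasi-greedy expansion of 1 in base q with unbounded digits, is a strictly increasing one-to-one correspondence between the interval (1, ∞) and the set of sequences (α_i) of nonnegative integers having infinitely many nonzero terms and satisfying α_{n+1}α_{n+2}... ≤ α_1α_2... (lexicographically) for all n ≥ 1. -/

import Mathlib

/-- Strict lexicographic order on digit sequences (indexed from 0). -/
def LexLt (a b : ℕ → ℕ) : Prop :=
  ∃ n, (∀ k, k < n → a k = b k) ∧ a n < b n

/-- Non-strict lexicographic order on digit sequences. -/
def LexLe (a b : ℕ → ℕ) : Prop :=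
  LexLt a b ∨ a = b

/-- The next quasi-greedy digit with unbounded digits: the largest nonnegative integer `m`
with `s + m / q ^ (n+1) < x`, where `s` is the value of the previously chosen digits. -/
noncomputable def qgDigitU (q x s : ℝ) (n : ℕ) : ℕ :=
  sSup {m : ℕ | s + (m : ℝ) / q ^ (n + 1) < x}

/-- Partial sums of the quasi-greedy expansion of `x` in base `q` with unbounded digits. -/
noncomputable def qgSumU (q x : ℝ) : ℕ → ℝ
  | 0 => 0
  | n + 1 => qgSumU q x n + (qgDigitU q x (qgSumU q x n) n : ℝ) / q ^ (n + 1)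

/-- `quasiGreedyU q x n` is the `(n+1)`-st digit (indexing from 0) of the quasi-greedy
expansion of `x` in base `q` with unbounded digits: recursively, it is the largest
nonnegative integer `a_n` with `a_1/q + ⋯ + a_n/q^n < x`. -/
noncomputable def quasiGreedyU (q x : ℝ) (n : ℕ) : ℕ :=
  qgDigitU q x (qgSumU q x n) n

/-! ### Lex basics -/

lemma lexLt_total (a b : ℕ → ℕ) : LexLt a b ∨ a = b ∨ LexLt b a := by
  by_cases h : a = b
  · exact Or.inr (Or.inl h)
  · have : ∃ n, a n ≠ b n := by
      by_contra hc
      push_neg at hc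
      exact h (funext hc)
    classical
    let n := Nat.find this
    have hn : a n ≠ b n := Nat.find_spec this
    have hk : ∀ k, k < n → a k = b k := fun k hk => by
      have := Nat.find_min this hk
      simpa using this
    rcases lt_or_gt_of_ne hn with h1 | h1
    · exact Or.inl ⟨n, hk, h1⟩
    · exact Or.inr (Or.inr ⟨n, fun k hkn => (hk k hkn).symm, h1⟩)

lemma lexLt_irrefl (a : ℕ → ℕ) : ¬ LexLt a a := by
  rintro ⟨n, -, hn⟩; exact lt_irrefl _ hn

/-! ### Basic digit facts -/

section Basic

variable {q : ℝ} (hq : 1 < q)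

lemma qpow_pos (hq : 1 < q) (n : ℕ) : (0:ℝ) < q ^ n := pow_pos (lt_trans one_pos hq) n

include hq

lemma qgDigit_spec {s : ℝ} (hs : s < 1) (n : ℕ) :
    s + (qgDigitU q 1 s n : ℝ) / q ^ (n + 1) < 1 ∧
      1 ≤ s + ((qgDigitU q 1 s n : ℝ) + 1) / q ^ (n + 1) := by
  set S := {m : ℕ | s + (m : ℝ) / q ^ (n + 1) < 1} with hS
  have hpow : (0:ℝ) < q ^ (n + 1) := qpow_pos hq _
  have h0 : (0:ℕ) ∈ S := by simp [hS, hs]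
  have hbdd : BddAbove S := by
    refine ⟨⌈(1 - s) * q ^ (n + 1)⌉₊, fun m hm => ?_⟩
    have hm' : (m : ℝ) / q ^ (n + 1) < 1 - s := by
      simp only [hS, Set.mem_setOf_eq] at hm; linarith
    have : (m : ℝ) ≤ (1 - s) * q ^ (n + 1) := by
      rw [div_lt_iff₀ hpow] at hm'
      linarith
    exact_mod_cast le_trans this (Nat.le_ceil _)
  have hmem : qgDigitU q 1 s n ∈ S := Nat.sSup_mem ⟨0, h0⟩ hbdd
  constructor
  · exact hmem
  · by_contra hc
    push_neg at hc
    have : qgDigitU q 1 s n + 1 ∈ S := by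
      simp only [hS, Set.mem_setOf_eq]
      push_cast
      linarith
    have := le_csSup hbdd this
    simp only [qgDigitU, ← hS] at this
    omega

lemma qgSumU_lt_one : ∀ n, qgSumU q 1 n < 1 := by
  intro n
  induction n with
  | zero => simp [qgSumU]
  | succ n ih =>
    exact (qgDigit_spec hq ih n).1

lemma qgSumU_ge (n : ℕ) : 1 - 1 / q ^ n ≤ qgSumU q 1 n := by
  induction n with
  | zero => simp [qgSumU]
  | succ n ih =>
    have h := (qgDigit_spec hq (qgSumU_lt_one hq n) n).2
    have : qgSumU q 1 (n+1) = qgSumU q 1 n + (quasiGreedyU q 1 n : ℝ) / q ^ (n + 1) := rfl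
    have hpow : (0:ℝ) < q ^ (n + 1) := qpow_pos hq _
    rw [this]
    have := (qgDigit_spec hq (qgSumU_lt_one hq n) n).2
    simp only [quasiGreedyU]
    rw [add_div] at this
    linarith

lemma qgSumU_eq_sum (n : ℕ) :
    qgSumU q 1 n = ∑ i ∈ Finset.range n, (quasiGreedyU q 1 i : ℝ) / q ^ (i + 1) := by
  induction n with
  | zero => simp [qgSumU]
  | succ n ih =>
    rw [Finset.sum_range_succ, ← ih]
    rfl

lemma qgSumU_tendsto : Filter.Tendsto (qgSumU q 1) Filter.atTop (nhds 1) := by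
  have h1 : Filter.Tendsto (fun n : ℕ => 1 - 1 / q ^ n) Filter.atTop (nhds 1) := by
    have hq0 : Filter.Tendsto (fun n : ℕ => (1/q) ^ n) Filter.atTop (nhds 0) :=
      tendsto_pow_atTop_nhds_zero_of_lt_one (by positivity)
        (by rw [div_lt_one (lt_trans one_pos hq)]; exact hq)
    simpa [one_div, inv_pow] using (tendsto_const_nhds (x := (1:ℝ))).sub hq0
  exact tendsto_of_tendsto_of_tendsto_of_le_of_le h1 tendsto_const_nhds
    (fun n => qgSumU_ge hq n) (fun n => (qgSumU_lt_one hq n).le)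

lemma quasiGreedyU_hasSum :
    HasSum (fun i => (quasiGreedyU q 1 i : ℝ) / q ^ (i + 1)) 1 := by
  rw [hasSum_iff_tendsto_nat_of_nonneg (fun i => by positivity)]
  have := qgSumU_tendsto hq
  refine this.congr fun n => qgSumU_eq_sum hq n

lemma quasiGreedyU_infinite : {n | quasiGreedyU q 1 n ≠ 0}.Infinite := by
  by_contra hfin
  rw [Set.not_infinite] at hfin
  obtain ⟨N, hN⟩ : ∃ N, ∀ n, N ≤ n → quasiGreedyU q 1 n = 0 := by
    rcases hfin.bddAbove with ⟨N, hN⟩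
    exact ⟨N + 1, fun n hn => by
      by_contra h
      have := hN (show n ∈ {n | quasiGreedyU q 1 n ≠ 0} from h)
      omega⟩
  have hconst : ∀ n, N ≤ n → qgSumU q 1 n = qgSumU q 1 N := by
    intro n
    induction n with
    | zero => intro hn; have : N = 0 := by omega
              rw [this]
    | succ n ih =>
      intro hn
      rcases Nat.lt_or_ge N (n+1) with h | h
      · have hNn : N ≤ n := by omega
        have : qgSumU q 1 (n+1) = qgSumU q 1 n + (quasiGreedyU q 1 n : ℝ) / q ^ (n+1) := rfl
        rw [this, hN n hNn, ih hNn]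
        simp
      · have : N = n + 1 := by omega
        rw [this]
  have hlim : Filter.Tendsto (qgSumU q 1) Filter.atTop (nhds (qgSumU q 1 N)) := by
    apply Filter.Tendsto.congr' _ tendsto_const_nhds
    filter_upwards [Filter.eventually_ge_atTop N] with n hn
    exact (hconst n hn).symm
  have := tendsto_nhds_unique hlim (qgSumU_tendsto hq)
  exact absurd this (ne_of_lt (qgSumU_lt_one hq N))

lemma lexLe_of_hasSum_le {b : ℕ → ℕ} {c : ℝ} (hb : {n | b n ≠ 0}.Infinite)
    (hsum : HasSum (fun i => (b i : ℝ) / q ^ (i + 1)) c) (hc : c ≤ 1) :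
    LexLe b (quasiGreedyU q 1) := by
  rcases lexLt_total b (quasiGreedyU q 1) with h | h | h
  · exact Or.inl h
  · exact Or.inr h
  · exfalso
    obtain ⟨n, hk, hn⟩ := h
    obtain ⟨j, hj, hjn⟩ := hb.exists_gt n
    have hjmem : j ∉ Finset.range (n + 1) := by simp; omega
    have hle := sum_le_hasSum (insert j (Finset.range (n + 1)))
      (fun i _ => by positivity) hsum
    rw [Finset.sum_insert hjmem, Finset.sum_range_succ] at hle
    have h1 : ∑ i ∈ Finset.range n, (b i : ℝ) / q ^ (i + 1) = qgSumU q 1 n := by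
      rw [qgSumU_eq_sum hq]
      exact Finset.sum_congr rfl (fun i hi => by rw [← hk i (Finset.mem_range.mp hi)])
    rw [h1] at hle
    have hspec := (qgDigit_spec hq (qgSumU_lt_one hq n) n).2
    have hbn : (quasiGreedyU q 1 n : ℝ) + 1 ≤ (b n : ℝ) := by exact_mod_cast hn
    have hbj : (1:ℝ) ≤ (b j : ℝ) := by
      have : 1 ≤ b j := Nat.one_le_iff_ne_zero.mpr hj
      exact_mod_cast this
    have hpn : (0:ℝ) < q ^ (n + 1) := qpow_pos hq _
    have hpj : (0:ℝ) < q ^ (j + 1) := qpow_pos hq _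
    have e1 : ((quasiGreedyU q 1 n : ℝ) + 1) / q ^ (n + 1) ≤ (b n : ℝ) / q ^ (n + 1) := by
      gcongr
    have e2 : (0:ℝ) < (b j : ℝ) / q ^ (j + 1) := by
      apply div_pos (by linarith) hpj
    rw [show qgDigitU q 1 (qgSumU q 1 n) n = quasiGreedyU q 1 n from rfl] at hspec
    linarith

lemma tail_hasSum (n : ℕ) :
    HasSum (fun i => (quasiGreedyU q 1 (n + i) : ℝ) / q ^ (i + 1))
      (q ^ n * (1 - qgSumU q 1 n)) := by
  have hqpos : (0:ℝ) < q := lt_trans one_pos hq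
  have key : ∀ k, ∑ i ∈ Finset.range k, (quasiGreedyU q 1 (n + i) : ℝ) / q ^ (i + 1)
      = q ^ n * (qgSumU q 1 (n + k) - qgSumU q 1 n) := by
    intro k
    induction k with
    | zero => simp
    | succ k ih =>
      rw [Finset.sum_range_succ, ih]
      have : qgSumU q 1 (n + (k+1)) = qgSumU q 1 (n + k)
          + (quasiGreedyU q 1 (n + k) : ℝ) / q ^ (n + k + 1) := by
        have : n + (k + 1) = (n + k) + 1 := by omega
        rw [this]; rfl
      rw [this]
      have hp : q ^ (n + k + 1) = q ^ n * q ^ (k + 1) := by ring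
      field_simp [hp]
      ring
  rw [hasSum_iff_tendsto_nat_of_nonneg (fun i => by positivity)]
  have h2 : Filter.Tendsto (fun k => qgSumU q 1 (n + k)) Filter.atTop (nhds 1) := by
    have := (qgSumU_tendsto hq).comp (Filter.tendsto_add_atTop_nat n)
    simpa [Function.comp_def, Nat.add_comm] using this
  have h3 : Filter.Tendsto (fun k => q ^ n * (qgSumU q 1 (n + k) - qgSumU q 1 n))
      Filter.atTop (nhds (q ^ n * (1 - qgSumU q 1 n))) :=
    (h2.sub (tendsto_const_nhds (x := qgSumU q 1 n))).const_mul _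
  exact h3.congr (fun k => (key k).symm)

lemma tail_infinite (n : ℕ) : {i | quasiGreedyU q 1 (n + i) ≠ 0}.Infinite := by
  have h := quasiGreedyU_infinite hq
  by_contra hfin
  rw [Set.not_infinite] at hfin
  apply h
  have hsub : {m | quasiGreedyU q 1 m ≠ 0} ⊆
      Set.Iio n ∪ (fun i => n + i) '' {i | quasiGreedyU q 1 (n + i) ≠ 0} := by
    intro m hm
    rcases lt_or_ge m n with h' | h'
    · exact Or.inl h'
    · refine Or.inr ⟨m - n, ?_, by show n + (m - n) = m; omega⟩
      have : n + (m - n) = m := by omega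
      simp only [Set.mem_setOf_eq, this]
      exact hm
  exact ((Set.finite_Iio n).union (hfin.image _)).subset hsub

lemma shift_le (n : ℕ) :
    LexLe (fun i => quasiGreedyU q 1 (n + 1 + i)) (quasiGreedyU q 1) := by
  apply lexLe_of_hasSum_le hq (tail_infinite hq (n+1)) (tail_hasSum hq (n+1))
  have h1 : 1 - qgSumU q 1 (n+1) ≤ 1 / q ^ (n+1) := by
    have := qgSumU_ge hq (n+1)
    linarith
  have hp : (0:ℝ) < q ^ (n+1) := qpow_pos hq _
  calc q ^ (n+1) * (1 - qgSumU q 1 (n+1)) ≤ q ^ (n+1) * (1 / q ^ (n+1)) := by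
        apply mul_le_mul_of_nonneg_left h1 hp.le
    _ = 1 := by field_simp

end Basic

lemma quasiGreedyU_strictMono {q q' : ℝ} (hq : 1 < q) (hqq : q < q') :
    LexLt (quasiGreedyU q 1) (quasiGreedyU q' 1) := by
  have hq' : 1 < q' := hq.trans hqq
  have hsum := quasiGreedyU_hasSum hq
  have hle : ∀ i, (quasiGreedyU q 1 i : ℝ) / q' ^ (i+1) ≤ (quasiGreedyU q 1 i : ℝ) / q ^ (i+1) := by
    intro i
    apply div_le_div_of_nonneg_left (by positivity) (qpow_pos hq _)
    exact pow_le_pow_left₀ (by linarith) hqq.le _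
  have hsum' : Summable (fun i => (quasiGreedyU q 1 i : ℝ) / q' ^ (i+1)) :=
    Summable.of_nonneg_of_le (fun i => by positivity) hle hsum.summable
  obtain ⟨j, hj⟩ := (quasiGreedyU_infinite hq).nonempty
  have hstrict : (quasiGreedyU q 1 j : ℝ) / q' ^ (j+1) < (quasiGreedyU q 1 j : ℝ) / q ^ (j+1) := by
    have hcj : (0:ℝ) < (quasiGreedyU q 1 j : ℝ) := by
      have : 1 ≤ quasiGreedyU q 1 j := Nat.one_le_iff_ne_zero.mpr hj
      exact_mod_cast Nat.lt_of_lt_of_le Nat.zero_lt_one this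
    apply div_lt_div_of_pos_left hcj (qpow_pos hq _)
    exact pow_lt_pow_left₀ hqq (by linarith) (by omega)
  have hval : (∑' i, (quasiGreedyU q 1 i : ℝ) / q' ^ (i+1)) < 1 := by
    calc (∑' i, (quasiGreedyU q 1 i : ℝ) / q' ^ (i+1))
        < ∑' i, (quasiGreedyU q 1 i : ℝ) / q ^ (i+1) :=
          Summable.tsum_lt_tsum hle hstrict hsum' hsum.summable
      _ = 1 := hsum.tsum_eq
  have hlexle := lexLe_of_hasSum_le hq' (quasiGreedyU_infinite hq) hsum'.hasSum hval.le
  rcases hlexle with h | h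
  · exact h
  · exfalso
    have h1 := quasiGreedyU_hasSum hq'
    rw [← h] at h1
    rw [h1.tsum_eq] at hval
    exact lt_irrefl _ hval


noncomputable def tailVal (q : ℝ) (α : ℕ → ℕ) (m : ℕ) : ℝ :=
  ∑' i, (α (m + i) : ℝ) / q ^ (i + 1)

section Surj

variable {q : ℝ} {α : ℕ → ℕ}

lemma digits_bounded (hshift : ∀ n, LexLe (fun i => α (n + 1 + i)) α) (n : ℕ) :
    α n ≤ α 0 := by
  cases n with
  | zero => exact le_refl _
  | succ n =>
    rcases hshift n with h | h
    · obtain ⟨k, hk, hlt⟩ := h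
      cases k with
      | zero => simpa using hlt.le
      | succ k => simpa using (hk 0 (by omega)).le
    · have := congrFun h 0
      simpa using this.le

lemma summable_tail (hq : 1 < q) (hbd : ∀ n, α n ≤ α 0) (m : ℕ) :
    Summable fun i => (α (m + i) : ℝ) / q ^ (i + 1) := by
  have hq0 : (0:ℝ) < q := lt_trans one_pos hq
  have hr : (1:ℝ)/q < 1 := by rw [div_lt_one hq0]; exact hq
  have hgeom : Summable fun i : ℕ => ((α 0 : ℝ) * (1/q)) * (1/q) ^ i :=
    (summable_geometric_of_lt_one (by positivity) hr).mul_left _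
  apply Summable.of_nonneg_of_le (fun i => by positivity) (fun i => ?_) hgeom
  have h1 : (α (m + i) : ℝ) / q ^ (i+1) ≤ (α 0 : ℝ) / q ^ (i+1) := by
    gcongr
    exact_mod_cast hbd (m + i)
  refine le_trans h1 (le_of_eq ?_)
  rw [div_pow, one_pow]
  field_simp
  ring

lemma tailVal_nonneg (hq : 1 < q) (m : ℕ) : 0 ≤ tailVal q α m :=
  tsum_nonneg fun i => div_nonneg (Nat.cast_nonneg _) (pow_pos (lt_trans one_pos hq) _).le

lemma tailVal_le_bound (hq : 1 < q) (hbd : ∀ n, α n ≤ α 0) (m : ℕ) :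
    tailVal q α m ≤ ∑' i : ℕ, ((α 0 : ℝ) * (1/q)) * (1/q) ^ i := by
  have hq0 : (0:ℝ) < q := lt_trans one_pos hq
  have hr : (1:ℝ)/q < 1 := by rw [div_lt_one hq0]; exact hq
  have hgeom : Summable fun i : ℕ => ((α 0 : ℝ) * (1/q)) * (1/q) ^ i :=
    (summable_geometric_of_lt_one (by positivity) hr).mul_left _
  apply Summable.tsum_le_tsum _ (summable_tail hq hbd m) hgeom
  intro i
  have h1 : (α (m + i) : ℝ) / q ^ (i+1) ≤ (α 0 : ℝ) / q ^ (i+1) := by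
    gcongr
    exact_mod_cast hbd (m + i)
  refine le_trans h1 (le_of_eq ?_)
  rw [div_pow, one_pow]
  field_simp
  ring

lemma tailVal_split (hq : 1 < q) (hbd : ∀ n, α n ≤ α 0) (m k : ℕ) :
    tailVal q α m = (∑ j ∈ Finset.range k, (α (m + j) : ℝ) / q ^ (j + 1))
      + (q ^ k)⁻¹ * tailVal q α (m + k) := by
  have hq0 : (0:ℝ) < q := lt_trans one_pos hq
  have hsm := summable_tail hq hbd m
  rw [tailVal, ← Summable.sum_add_tsum_nat_add k hsm]
  congr 1
  rw [tailVal, ← tsum_mul_left]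
  apply tsum_congr
  intro i
  have h1 : m + (i + k) = m + k + i := by omega
  have hpow : q ^ (i + k + 1) = q ^ k * q ^ (i + 1) := by ring
  rw [h1, hpow]
  field_simp

lemma tailVal_pos (hq : 1 < q) (hbd : ∀ n, α n ≤ α 0)
    (hinf : {n | α n ≠ 0}.Infinite) (m : ℕ) : 0 < tailVal q α m := by
  obtain ⟨j, hj, hjm⟩ := hinf.exists_gt m
  have heq : m + (j - m) = j := by omega
  have hterm : 0 < (α (m + (j - m)) : ℝ) / q ^ ((j - m) + 1) := by
    rw [heq]
    have h1 : 1 ≤ α j := Nat.one_le_iff_ne_zero.mpr hj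
    have h1' : (1:ℝ) ≤ (α j : ℝ) := by exact_mod_cast h1
    have := pow_pos (lt_trans one_pos hq) (j - m + 1)
    positivity
  exact lt_of_lt_of_le hterm (Summable.le_tsum (summable_tail hq hbd m) _ (fun i _ => by positivity))

lemma tailVal_le_one (hq : 1 < q) (hbd : ∀ n, α n ≤ α 0)
    (hsum1 : tailVal q α 0 = 1)
    (hshift : ∀ n, LexLe (fun i => α (n + 1 + i)) α) (m : ℕ) :
    tailVal q α m ≤ 1 := by
  have hq0 : (0:ℝ) < q := lt_trans one_pos hq
  set V := sSup (Set.range (tailVal q α)) with hV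
  have hbdd : BddAbove (Set.range (tailVal q α)) := by
    refine ⟨∑' i : ℕ, ((α 0 : ℝ) * (1/q)) * (1/q) ^ i, ?_⟩
    rintro x ⟨m', rfl⟩
    exact tailVal_le_bound hq hbd m'
  have hV1 : 1 ≤ V := by
    have : tailVal q α 0 ∈ Set.range (tailVal q α) := ⟨0, rfl⟩
    rw [hsum1] at this
    exact le_csSup hbdd this
  have claim : ∀ m', tailVal q α m' ≤ 1 + (V - 1) / q := by
    intro m'
    cases m' with
    | zero =>
      rw [hsum1]
      have : 0 ≤ (V - 1) / q := div_nonneg (by linarith) hq0.le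
      linarith
    | succ n =>
      rcases hshift n with h | h
      · obtain ⟨k, hk, hlt⟩ := h
        have hsplit := tailVal_split hq hbd (n + 1) (k + 1)
        have hpartial : ∑ j ∈ Finset.range (k+1), (α (n + 1 + j) : ℝ) / q ^ (j + 1)
            ≤ (∑ j ∈ Finset.range (k+1), (α j : ℝ) / q ^ (j + 1)) - 1 / q ^ (k + 1) := by
          rw [Finset.sum_range_succ, Finset.sum_range_succ]
          have e1 : ∑ j ∈ Finset.range k, (α (n + 1 + j) : ℝ) / q ^ (j + 1)
              = ∑ j ∈ Finset.range k, (α j : ℝ) / q ^ (j + 1) :=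
            Finset.sum_congr rfl fun j hj => by
              have hkj : α (n + 1 + j) = α j := hk j (Finset.mem_range.mp hj)
              rw [hkj]
          rw [e1]
          have e2 : (α (n + 1 + k) : ℝ) ≤ (α k : ℝ) - 1 := by
            have : α (n + 1 + k) + 1 ≤ α k := hlt
            have := (Nat.cast_le (α := ℝ)).mpr this
            push_cast at this
            linarith
          have hpk : (0:ℝ) < q ^ (k + 1) := pow_pos hq0 _
          have : (α (n+1+k) : ℝ) / q ^ (k+1) ≤ ((α k : ℝ) - 1) / q ^ (k+1) := by gcongr
          rw [sub_div] at this
          linarith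
        have hps : ∑ j ∈ Finset.range (k+1), (α j : ℝ) / q ^ (j + 1) ≤ 1 := by
          have h0 := tailVal_split hq hbd 0 (k+1)
          rw [hsum1] at h0
          have hnn : 0 ≤ (q ^ (k+1))⁻¹ * tailVal q α (0 + (k+1)) := by
            have := tailVal_nonneg (q := q) (α := α) hq (0 + (k+1))
            positivity
          have e3 : ∑ j ∈ Finset.range (k+1), (α (0 + j) : ℝ) / q ^ (j + 1)
              = ∑ j ∈ Finset.range (k+1), (α j : ℝ) / q ^ (j + 1) :=
            Finset.sum_congr rfl fun j _ => by rw [zero_add]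
          rw [e3] at h0
          linarith
        have hVtail : tailVal q α (n + 1 + (k + 1)) ≤ V :=
          le_csSup hbdd ⟨n + 1 + (k + 1), rfl⟩
        have hqk : (0:ℝ) < q ^ (k+1) := pow_pos hq0 _
        have hstep : tailVal q α (n+1) ≤ 1 - 1/q^(k+1) + (q^(k+1))⁻¹ * V := by
          rw [hsplit]
          have : (q^(k+1))⁻¹ * tailVal q α (n + 1 + (k + 1)) ≤ (q^(k+1))⁻¹ * V := by
            apply mul_le_mul_of_nonneg_left hVtail
            positivity
          linarith
        have hfin : 1 - 1/q^(k+1) + (q^(k+1))⁻¹ * V = 1 + (V - 1)/q^(k+1) := by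
          field_simp
          ring
        rw [hfin] at hstep
        refine le_trans hstep ?_
        have hmono : (V - 1)/q^(k+1) ≤ (V - 1)/q :=
          div_le_div_of_nonneg_left (by linarith) hq0
            (le_self_pow₀ hq.le (Nat.succ_ne_zero k))
        linarith
      · have : tailVal q α (n + 1) = tailVal q α 0 := by
          apply tsum_congr
          intro i
          rw [show α (n + 1 + i) = α i from congrFun h i, zero_add]
        rw [this, hsum1]
        have : 0 ≤ (V - 1) / q := div_nonneg (by linarith) hq0.le
        linarith
  have hVle : V ≤ 1 + (V - 1) / q := by
    apply csSup_le (Set.range_nonempty _)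
    rintro x ⟨m', rfl⟩
    exact claim m'
  have hV_le_one : V ≤ 1 := by
    by_contra h
    push_neg at h
    have : (V - 1)/q < V - 1 := div_lt_self (by linarith) hq
    linarith
  exact le_trans (le_csSup hbdd ⟨m, rfl⟩) hV_le_one

lemma quasiGreedyU_eq_of (hq : 1 < q) (hinf : {n | α n ≠ 0}.Infinite)
    (hbd : ∀ n, α n ≤ α 0) (hsum1 : tailVal q α 0 = 1)
    (hshift : ∀ n, LexLe (fun i => α (n + 1 + i)) α) :
    quasiGreedyU q 1 = α := by
  have hq0 : (0:ℝ) < q := lt_trans one_pos hq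
  have htail := tailVal_le_one hq hbd hsum1 hshift
  have htpos := tailVal_pos hq hbd hinf
  -- recursion : tailVal m = α m / q + tailVal (m+1) / q
  have hrec : ∀ m, tailVal q α m = (α m : ℝ) / q + (tailVal q α (m + 1)) / q := by
    intro m
    have := tailVal_split hq hbd m 1
    simpa [Finset.sum_range_one, pow_one, div_eq_mul_inv, mul_comm] using this
  -- the crucial step : if the partial sums agree, the next digit agrees
  have hstep : ∀ n, qgSumU q 1 n = ∑ i ∈ Finset.range n, (α i : ℝ) / q ^ (i + 1) →
      quasiGreedyU q 1 n = α n := by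
    intro n hs
    have hsplit0 := tailVal_split hq hbd 0 n
    rw [hsum1] at hsplit0
    have e3 : ∑ j ∈ Finset.range n, (α (0 + j) : ℝ) / q ^ (j + 1)
        = ∑ j ∈ Finset.range n, (α j : ℝ) / q ^ (j + 1) :=
      Finset.sum_congr rfl fun j _ => by rw [zero_add]
    rw [e3, ← hs] at hsplit0
    rw [zero_add] at hsplit0
    -- hsplit0 : 1 = qgSumU q 1 n + (q ^ n)⁻¹ * tailVal q α n
    have hpn : (0:ℝ) < q ^ n := pow_pos hq0 _
    have hpn1 : (0:ℝ) < q ^ (n + 1) := pow_pos hq0 _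
    have hqn1 : q ^ (n + 1) = q ^ n * q := by ring
    rw [hrec n, mul_add] at hsplit0
    have hid : (q ^ n)⁻¹ * ((α n : ℝ) / q) = (α n : ℝ) / q ^ (n + 1) := by
      rw [hqn1]; field_simp
    have hid1 : (q ^ n)⁻¹ * ((1:ℝ) / q) = 1 / q ^ (n + 1) := by
      rw [hqn1]; field_simp
    rw [hid] at hsplit0
    -- hsplit0 : 1 = qgSumU + (α n / q^(n+1) + (q^n)⁻¹ * (tailVal (n+1) / q))
    have hxt_pos : 0 < (q ^ n)⁻¹ * (tailVal q α (n + 1) / q) :=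
      mul_pos (inv_pos.mpr hpn) (div_pos (htpos (n + 1)) hq0)
    have hxt_le : (q ^ n)⁻¹ * (tailVal q α (n + 1) / q) ≤ 1 / q ^ (n + 1) := by
      rw [← hid1]
      have h1 : tailVal q α (n + 1) / q ≤ 1 / q := by
        apply div_le_div_of_nonneg_right ?_ hq0.le
        exact htail (n + 1)
      apply mul_le_mul_of_nonneg_left h1 (inv_nonneg.mpr hpn.le)
    have hmem : qgSumU q 1 n + (α n : ℝ) / q ^ (n + 1) < 1 := by linarith
    have hub : ∀ m : ℕ, qgSumU q 1 n + (m : ℝ) / q ^ (n + 1) < 1 → m ≤ α n := by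
      intro m hm
      by_contra hc
      push_neg at hc
      have hge : (α n : ℝ) + 1 ≤ (m : ℝ) := by exact_mod_cast hc
      have h4 : ((α n : ℝ) + 1) / q ^ (n + 1) ≤ (m : ℝ) / q ^ (n + 1) := by gcongr
      rw [add_div] at h4
      linarith
    -- now identify the sSup
    show qgDigitU q 1 (qgSumU q 1 n) n = α n
    rw [qgDigitU]
    apply le_antisymm
    · have h0mem : (0:ℕ) ∈ {m : ℕ | qgSumU q 1 n + (m:ℝ)/q^(n+1) < 1} := by
        have hnn : 0 ≤ (α n : ℝ)/q^(n+1) := div_nonneg (Nat.cast_nonneg _) hpn1.le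
        simp only [Set.mem_setOf_eq, Nat.cast_zero, zero_div, add_zero]
        linarith
      exact csSup_le ⟨0, h0mem⟩ hub
    · exact le_csSup ⟨α n, fun m hm => hub m hm⟩ hmem
  have hsums : ∀ n, qgSumU q 1 n = ∑ i ∈ Finset.range n, (α i : ℝ) / q ^ (i + 1) := by
    intro n
    induction n with
    | zero => simp [qgSumU]
    | succ n ih =>
      have hd := hstep n ih
      have : qgSumU q 1 (n + 1) = qgSumU q 1 n + (quasiGreedyU q 1 n : ℝ) / q ^ (n + 1) := rfl
      rw [this, Finset.sum_range_succ, ih, hd]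
  funext n
  exact hstep n (hsums n)

lemma exists_base (hinf : {n | α n ≠ 0}.Infinite)
    (hshift : ∀ n, LexLe (fun i => α (n + 1 + i)) α) :
    ∃ q : ℝ, 1 < q ∧ tailVal q α 0 = 1 := by
  have hbd := digits_bounded hshift
  set f : ℝ → ℝ := fun p => tailVal p α 0 with hf
  have hfe : ∀ p : ℝ, f p = ∑' i, (α i : ℝ) / p ^ (i + 1) := by
    intro p
    exact tsum_congr fun i => by rw [zero_add]
  have hmono : ∀ p p' : ℝ, 1 < p → p ≤ p' → f p' ≤ f p := by
    intro p p' hp hpp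
    apply Summable.tsum_le_tsum _ (summable_tail (lt_of_lt_of_le hp hpp) hbd 0) (summable_tail hp hbd 0)
    intro i
    apply div_le_div_of_nonneg_left (Nat.cast_nonneg _) (pow_pos (lt_trans one_pos hp) _)
    exact pow_le_pow_left₀ (by linarith) hpp _
  -- the value at b = α 0 + 2 is < 1
  set b : ℝ := (α 0 : ℝ) + 2 with hb
  have hA0 : (0:ℝ) ≤ (α 0 : ℝ) := Nat.cast_nonneg _
  have hb1 : 1 < b := by rw [hb]; linarith
  have hb0 : (0:ℝ) < b := by linarith
  have hfb : f b < 1 := by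
    have h1 := tailVal_le_bound hb1 hbd 0
    have hr : (1:ℝ)/b < 1 := by rw [div_lt_one hb0]; exact hb1
    have hgeo : ∑' i : ℕ, ((α 0 : ℝ) * (1/b)) * (1/b) ^ i
        = ((α 0 : ℝ) * (1/b)) * (1 - 1/b)⁻¹ := by
      rw [tsum_mul_left, tsum_geometric_of_lt_one (by positivity) hr]
    have hpos1 : (0:ℝ) < 1 - 1/b := by linarith
    have hlt1 : ((α 0 : ℝ) * (1/b)) * (1 - 1/b)⁻¹ < 1 := by
      rw [← div_eq_mul_inv, div_lt_one hpos1, mul_one_div, div_lt_iff₀ hb0]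
      have hexp : (1 - 1/b) * b = b - 1 := by field_simp
      rw [hexp, hb]
      linarith
    calc f b ≤ ∑' i : ℕ, ((α 0 : ℝ) * (1/b)) * (1/b) ^ i := h1
      _ = ((α 0 : ℝ) * (1/b)) * (1 - 1/b)⁻¹ := hgeo
      _ < 1 := hlt1
  -- the value at a suitable a > 1 is ≥ 1
  obtain ⟨j₁, hj₁⟩ := hinf.nonempty
  obtain ⟨j₂, hj₂, hjj⟩ := hinf.exists_gt j₁
  set N : ℕ := j₂ + 1 with hN
  set a : ℝ := (2 : ℝ) ^ ((N : ℝ)⁻¹) with ha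
  have hNpos : (0:ℝ) < (N : ℝ) := by positivity
  have ha1 : 1 < a := by
    rw [ha]
    exact (Real.one_lt_rpow_iff_of_pos (by norm_num)).mpr (Or.inl ⟨one_lt_two, by positivity⟩)
  have haN : a ^ N = 2 := by
    rw [ha, ← Real.rpow_natCast ((2:ℝ) ^ ((N : ℝ)⁻¹)) N, ← Real.rpow_mul (by norm_num)]
    rw [inv_mul_cancel₀ (by positivity : (N:ℝ) ≠ 0)]
    exact Real.rpow_one 2
  have hfa : 1 ≤ f a := by
    rw [hfe]
    have hsm : Summable (fun i => (α i : ℝ) / a ^ (i + 1)) := by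
      have := summable_tail ha1 hbd 0
      exact this.congr fun i => by rw [zero_add]
    have hj12 : j₁ ≠ j₂ := by omega
    have hsum := Summable.sum_le_tsum ({j₁, j₂} : Finset ℕ)
      (fun i _ => by positivity) hsm
    rw [Finset.sum_pair hj12] at hsum
    have hterm : ∀ j, j ∈ ({n | α n ≠ 0}) → j < N → (1:ℝ)/2 ≤ (α j : ℝ) / a ^ (j + 1) := by
      intro j hj hjN
      have h1 : (1:ℝ) ≤ (α j : ℝ) := by
        have := Nat.one_le_iff_ne_zero.mpr hj
        exact_mod_cast this
      have h2 : a ^ (j + 1) ≤ a ^ N := pow_le_pow_right₀ ha1.le (by omega)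
      rw [haN] at h2
      calc (1:ℝ)/2 ≤ 1 / a ^ (j+1) := by
            apply div_le_div_of_nonneg_left one_pos.le (pow_pos (by linarith) _) h2
        _ ≤ (α j : ℝ) / a ^ (j + 1) := by
            apply div_le_div_of_nonneg_right h1 (pow_pos (by linarith) _).le
    have ht1 := hterm j₁ hj₁ (by omega)
    have ht2 := hterm j₂ hj₂ (by omega)
    linarith
  have hab : a < b := by
    by_contra hcon
    push_neg at hcon
    have := hmono b a hb1 hcon
    linarith
  have hcont : ContinuousOn f (Set.Icc a b) := by
    have ha0 : (0:ℝ) < a := by linarith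
    have hra : (1:ℝ)/a < 1 := by rw [div_lt_one ha0]; exact ha1
    have hcont' : ContinuousOn (fun p : ℝ => ∑' i, (α i : ℝ) / p ^ (i + 1)) (Set.Icc a b) := by
      apply continuousOn_tsum (u := fun i => ((α 0 : ℝ) * (1/a)) * (1/a) ^ i)
      · intro i
        apply ContinuousOn.div continuousOn_const (continuous_pow _).continuousOn
        intro p hp
        exact (pow_pos (lt_of_lt_of_le ha0 hp.1) _).ne'
      · exact (summable_geometric_of_lt_one (by positivity) hra).mul_left _
      · intro i p hp
        have hp0 : 0 < p := lt_of_lt_of_le ha0 hp.1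
        rw [Real.norm_eq_abs, abs_of_nonneg (by positivity)]
        have h1 : (α i : ℝ) / p ^ (i+1) ≤ (α 0 : ℝ) / a ^ (i+1) := by
          apply div_le_div₀ (Nat.cast_nonneg _) (by exact_mod_cast hbd i)
            (pow_pos ha0 _) (pow_le_pow_left₀ ha0.le hp.1 _)
        refine le_trans h1 (le_of_eq ?_)
        rw [div_pow, one_pow]
        field_simp
        ring
    exact hcont'.congr fun p _ => hfe p
  obtain ⟨q, hqmem, hfq⟩ := intermediate_value_Icc' hab.le hcont ⟨hfb.le, hfa⟩
  exact ⟨q, lt_of_lt_of_le ha1 hqmem.1, hfq⟩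

end Surj


/-- Theorem 2.5 (a): `q ↦ (α_i)`, the quasi-greedy expansion of `1` in base `q` with
unbounded digits, is a strictly increasing one-to-one correspondence between `(1, ∞)`
and the set of infinite sequences of nonnegative integers satisfying
`α_{n+1}α_{n+2}… ≤ α_1α_2…` for all `n`. -/
theorem quasiGreedyU_one_bijection :
    (∀ q q' : ℝ, 1 < q → q < q' → LexLt (quasiGreedyU q 1) (quasiGreedyU q' 1)) ∧
    Set.BijOn (fun q : ℝ => quasiGreedyU q 1) (Set.Ioi 1)
      {α : ℕ → ℕ | {n | α n ≠ 0}.Infinite ∧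
        ∀ n, LexLe (fun i => α (n + 1 + i)) α} := by
  constructor
  · exact fun q q' hq hqq => quasiGreedyU_strictMono hq hqq
  · refine ⟨?_, ?_, ?_⟩
    · intro q hq
      exact ⟨quasiGreedyU_infinite hq, fun n => shift_le hq n⟩
    · intro q hq q' hq' heq
      simp only at heq
      by_contra hne
      rcases lt_or_gt_of_ne hne with h | h
      · have := quasiGreedyU_strictMono hq h
        rw [heq] at this
        exact lexLt_irrefl _ this
      · have := quasiGreedyU_strictMono hq' h
        rw [heq] at this
        exact lexLt_irrefl _ this
    · intro α hα
      obtain ⟨hinf, hshift⟩ := hα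
      obtain ⟨q, hq1, hfq⟩ := exists_base hinf hshift
      exact ⟨q, hq1, quasiGreedyU_eq_of hq1 hinf (digits_bounded hshift) hfq hshift⟩
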